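/- arXiv:1605.04991 — 2 statements merged into one kernel-verified Lean document; each statement's English description precedes it below -/
import Mathlib

section
/- Let N be a nilpotent group acting on a set X, and let g₁ ∈ N be an element having a unique fixed point x₀ in X (i.e., x₀ is the only point with g₁·x₀ = x₀). Then x₀ is a fixed point of every element of N. -/
theorem stmt_2 {N X : Type*} [Group N] [Group.IsNilpotent N] [MulAction N X]
    (g₁ : N) (x₀ : X) (hfix : g₁ • x₀ = x₀)
    (huniq : ∀ y : X, g₁ • y = y → y = x₀) :
    ∀ g : N, g • x₀ = x₀ := by
  obtain ⟨n, hn⟩ := Group.IsNilpotent.nilpotent (G := N)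
  have key : ∀ i, ∀ g ∈ Subgroup.upperCentralSeries N i, g • x₀ = x₀ := by
    intro i
    induction i with
    | zero =>
      intro g hg
      simp only [upperCentralSeries_zero, Subgroup.mem_bot] at hg
      simp [hg]
    | succ k ih =>
      intro g hg
      rw [mem_upperCentralSeries_succ_iff] at hg
      have h1 : (g * g₁ * g⁻¹ * g₁⁻¹)⁻¹ ∈ Subgroup.upperCentralSeries N k :=
        (Subgroup.upperCentralSeries N k).inv_mem (hg g₁)
      have h2 : g⁻¹ * g₁ * g * g₁⁻¹ ∈ Subgroup.upperCentralSeries N k := by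
        have heq : g⁻¹ * g₁ * g * g₁⁻¹ = g⁻¹ * (g * g₁ * g⁻¹ * g₁⁻¹)⁻¹ * g⁻¹⁻¹ := by
          group
        rw [heq]
        exact Subgroup.Normal.conj_mem inferInstance _ h1 g⁻¹
      have key2 : g₁ • g • x₀ = g • x₀ := by
        have heq : g₁ * g = g * (g⁻¹ * g₁ * g * g₁⁻¹) * g₁ := by group
        rw [← mul_smul, heq, mul_smul, mul_smul, hfix, ih _ h2]
      exact huniq _ key2
  intro g
  exact key n g (by rw [hn]; exact Subgroup.mem_top g)
end

section
/- Let N be a finitely generated nilpotent group acting on a set X such that some element g₁ ∈ N has a unique fixed point x₀. Then the orbit N·x₀ equals {x₀}. -/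
theorem stmt_9 {N X : Type*} [Group N] [Group.IsNilpotent N] [MulAction N X]
    (hfg : Group.FG N) (g₁ : N) (x₀ : X)
    (huniq : {y : X | g₁ • y = y} = {x₀}) :
    MulAction.orbit N x₀ = {x₀} := by
  have hfix : ∀ y : X, g₁ • y = y → y = x₀ := by
    intro y hy
    have : y ∈ {y : X | g₁ • y = y} := hy
    rwa [huniq] at this
  have hg₁ : g₁ • x₀ = x₀ := by
    have : x₀ ∈ {y : X | g₁ • y = y} := by rw [huniq]; rfl
    exact this
  have key : ∀ n : ℕ, ∀ g ∈ Subgroup.upperCentralSeries N n, g • x₀ = x₀ := by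
    intro n
    induction n with
    | zero =>
      intro g hg
      rw [upperCentralSeries_zero, Subgroup.mem_bot] at hg
      simp [hg]
    | succ n ih =>
      intro g hg
      rw [mem_upperCentralSeries_succ_iff] at hg
      have hc : (g * g₁ * g⁻¹ * g₁⁻¹) • x₀ = x₀ := ih _ (hg g₁)
      have h2 : (g * g₁ * g⁻¹) • x₀ = x₀ := by
        have := congrArg (fun z => (g₁ : N)⁻¹ • z) hc
        simp only [← mul_smul] at this ⊢
        calc (g * g₁ * g⁻¹) • x₀ = (g * g₁ * g⁻¹ * g₁⁻¹ * g₁) • x₀ := by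
              group
          _ = (g * g₁ * g⁻¹ * g₁⁻¹) • (g₁ • x₀) := by rw [mul_smul]
          _ = (g * g₁ * g⁻¹ * g₁⁻¹) • x₀ := by rw [hg₁]
          _ = x₀ := hc
      have h3 : g₁ • (g⁻¹ • x₀) = g⁻¹ • x₀ := by
        have := congrArg (fun z => (g : N)⁻¹ • z) h2
        simpa [← mul_smul, mul_assoc] using this
      have h4 : g⁻¹ • x₀ = x₀ := hfix _ h3
      calc g • x₀ = g • (g⁻¹ • x₀) := by rw [h4]
        _ = x₀ := by simp [← mul_smul]
  obtain ⟨n, hn⟩ := Group.IsNilpotent.nilpotent (G := N)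
  ext y
  constructor
  · rintro ⟨g, rfl⟩
    have : (g : N) ∈ Subgroup.upperCentralSeries N n := by rw [hn]; trivial
    exact key n g this
  · rintro rfl
    exact MulAction.mem_orbit_self _
end
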